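/- arXiv:1001.2291 — 2 statements merged into one kernel-verified Lean document; each statement's English description precedes it below -/
import Mathlib

section
/- Let (G,X*) be a contracting self-similar action with limit space J_G/G = J, shift map s induced by the one-sided shift on X^{-ω}, and self-similar measure m (push-forward of the uniform Bernoulli measure under π : X^{-ω} → J). Then m-almost every point of J has exactly |X| preimages under s. -/
open MeasureTheory ENNReal

/-- A self-similar action of the group `G` over the alphabet `X`, given by the action
`g(xw) = (toFun g x) ((res g x) w)` on words: `toFun g` is the action on the first letter and
`res g x = g|_x` is the restriction. -/
structure SSA (G X : Type*) [Group G] where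
  toFun : G → X → X
  res : G → X → G
  toFun_one : ∀ x, toFun 1 x = x
  res_one : ∀ x, res 1 x = 1
  toFun_mul : ∀ g h x, toFun (g * h) x = toFun g (toFun h x)
  res_mul : ∀ g h x, res (g * h) x = res g (toFun h x) * res h x

namespace SSA

variable {G X : Type*} [Group G]

/-- Restriction of `g` along a finite word (head of the list = first letter read):
`g|_{x₁x₂…xₙ} = g|_{x₁}|_{x₂}…|_{xₙ}`. -/
def resW (S : SSA G X) : G → List X → G
  | g, [] => g
  | g, x :: v => S.resW (S.res g x) v

/-- Action of `g` on a finite word (head of the list = first letter read):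
`g(xw) = g(x) (g|_x)(w)`. -/
def actW (S : SSA G X) : G → List X → List X
  | _, [] => []
  | g, x :: v => S.toFun g x :: S.actW (S.res g x) v

/-- `N` is the nucleus of the (contracting) action: it is closed under restrictions, every
element restricts into `N` on all sufficiently long words, and it is the smallest such set. -/
def IsNucleus (S : SSA G X) (N : Finset G) : Prop :=
  (∀ g ∈ N, ∀ x : X, S.res g x ∈ N) ∧
  (∀ g : G, ∃ k : ℕ, ∀ v : List X, k ≤ v.length → S.resW g v ∈ N) ∧
  ∀ N' : Finset G, (∀ g : G, ∃ k : ℕ, ∀ v : List X, k ≤ v.length → S.resW g v ∈ N') → N ⊆ N'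

/-- There is a left-infinite path in the Moore diagram of the nucleus `N` which ends at the
vertex `h` and whose `i`-th edge is labeled `(w i, w' i)` (sequences are left-infinite,
index `0` being the rightmost letter): the vertices `q i ∈ N` satisfy
`q (i+1)|_{w i} = q i` and `q (i+1) (w i) = w' i`, with `q 0 = h`. -/
def MoorePath (S : SSA G X) (N : Finset G) (w w' : ℕ → X) (h : G) : Prop :=
  ∃ q : ℕ → G, q 0 = h ∧ (∀ i, q i ∈ N) ∧
    ∀ i : ℕ, S.res (q (i + 1)) (w i) = q i ∧ S.toFun (q (i + 1)) (w i) = w' i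

/-- The asymptotic equivalence relation on `X^{-ω} × G`: `w·g ~ w'·g'` iff there is a
left-infinite path in the Moore diagram of the nucleus labeled `(w, w')` ending at `g'g⁻¹`. -/
def AsympEquiv (S : SSA G X) (N : Finset G) (p q : (ℕ → X) × G) : Prop :=
  S.MoorePath N p.1 q.1 (q.2 * p.2⁻¹)

/-- The limit `G`-space: the quotient of `X^{-ω} × G` by the asymptotic equivalence relation. -/
def LimitGSpace (S : SSA G X) (N : Finset G) : Type _ :=
  Quot (S.AsympEquiv N)

/-- The tile `𝒯_v ⊂ J_G` for a finite word `v` (encoded as a list whose head is the rightmost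
letter): the image in the limit `G`-space of `X^{-ω}v × {1}`.  For `v = []` this is the tile `𝒯`,
the image of `X^{-ω} × {1}`. -/
def Tile (S : SSA G X) (N : Finset G) (v : List X) : Set (S.LimitGSpace N) :=
  Quot.mk (S.AsympEquiv N) ''
    {p : (ℕ → X) × G | p.2 = 1 ∧ ∀ (i : ℕ) (h : i < v.length), p.1 i = v.get ⟨i, h⟩}

/-- The translated tile `𝒯·g`: the image in the limit `G`-space of `X^{-ω} × {g}`. -/
def TileT (S : SSA G X) (N : Finset G) (g : G) : Set (S.LimitGSpace N) :=
  Quot.mk (S.AsympEquiv N) '' {p : (ℕ → X) × G | p.2 = g}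

variable [MeasurableSpace X] [MeasurableSpace G]

instance (S : SSA G X) (N : Finset G) : MeasurableSpace (S.LimitGSpace N) :=
  inferInstanceAs (MeasurableSpace (Quot (S.AsympEquiv N)))

/-- The measure `μ` on the limit `G`-space: the push-forward under the quotient map of the
product of the (uniform Bernoulli) measure `μ0` on `X^{-ω}` and the counting measure on `G`. -/
noncomputable def limitMeasure (S : SSA G X) (N : Finset G) (μ0 : Measure (ℕ → X)) :
    Measure (S.LimitGSpace N) :=
  Measure.map (Quot.mk (S.AsympEquiv N)) (μ0.prod Measure.count)

end SSA

/-- The cylinder subset of `X^{-ω}` of sequences whose last `u.length` letters spell `u`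
(head of `u` = rightmost letter). -/
def Cyl {X : Type*} (u : List X) : Set (ℕ → X) :=
  {w | ∀ (i : ℕ) (h : i < u.length), w i = u.get ⟨i, h⟩}

/-- The equivalence on `X^{-ω}` defining the limit space: `w ~ w'` iff there is a left-infinite
path in the Moore diagram of the nucleus labeled `(w, w')`. -/
def LimEquiv {G X : Type*} [Group G] (S : SSA G X) (N : Finset G) (w w' : ℕ → X) : Prop :=
  ∃ h : G, S.MoorePath N w w' h


namespace Stmt17
open Pointwise

variable {G X : Type*} [Group G]

/-! ### Basic algebra of self-similar actions -/

theorem toFun_inv (S : SSA G X) (g : G) (x : X) : S.toFun g⁻¹ (S.toFun g x) = x := by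
  rw [← S.toFun_mul, inv_mul_cancel, S.toFun_one]

theorem res_inv (S : SSA G X) (g : G) (x : X) :
    S.res g⁻¹ (S.toFun g x) = (S.res g x)⁻¹ := by
  have h := S.res_mul g⁻¹ g x
  rw [inv_mul_cancel, S.res_one] at h
  exact eq_inv_of_mul_eq_one_left h.symm

theorem resW_nil (S : SSA G X) (g : G) : S.resW g [] = g := rfl
theorem resW_cons (S : SSA G X) (g : G) (x : X) (v : List X) :
    S.resW g (x :: v) = S.resW (S.res g x) v := rfl
theorem actW_nil (S : SSA G X) (g : G) : S.actW g [] = [] := rfl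
theorem actW_cons (S : SSA G X) (g : G) (x : X) (v : List X) :
    S.actW g (x :: v) = S.toFun g x :: S.actW (S.res g x) v := rfl

theorem resW_one (S : SSA G X) : ∀ v : List X, S.resW 1 v = 1
  | [] => rfl
  | x :: v => by rw [resW_cons, S.res_one]; exact resW_one S v

theorem actW_length (S : SSA G X) : ∀ (g : G) (v : List X), (S.actW g v).length = v.length
  | _, [] => rfl
  | g, x :: v => by rw [actW_cons, List.length_cons, List.length_cons, actW_length]

theorem resW_append (S : SSA G X) : ∀ (u v : List X) (g : G),
    S.resW g (u ++ v) = S.resW (S.resW g u) v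
  | [], _, _ => rfl
  | x :: u, v, g => by rw [List.cons_append, resW_cons, resW_cons, resW_append]

theorem actW_append (S : SSA G X) : ∀ (u v : List X) (g : G),
    S.actW g (u ++ v) = S.actW g u ++ S.actW (S.resW g u) v
  | [], _, _ => rfl
  | x :: u, v, g => by
    rw [List.cons_append, actW_cons, actW_cons, List.cons_append, actW_append, resW_cons]

theorem resW_inv (S : SSA G X) : ∀ (v : List X) (g : G),
    S.resW g⁻¹ (S.actW g v) = (S.resW g v)⁻¹
  | [], _ => rfl
  | x :: v, g => by
    rw [actW_cons, resW_cons, res_inv, resW_cons]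
    exact resW_inv S v (S.res g x)

theorem actW_prefix_ne (S : SSA G X) {g : G} {u : List X} (h : S.actW g u ≠ u) (t : List X) :
    S.actW g (u ++ t) ≠ u ++ t := by
  intro he
  rw [actW_append] at he
  exact h (List.append_inj he (actW_length S g u)).1

/-! ### Nucleus lemmas -/

theorem one_mem (S : SSA G X) (N : Finset G) [Nonempty X] (hN : S.IsNucleus N) :
    (1 : G) ∈ N := by
  obtain ⟨k, hk⟩ := hN.2.1 1
  have := hk (List.replicate k (Classical.arbitrary X)) (by simp)
  rwa [resW_one] at this

theorem resW_mem (S : SSA G X) (N : Finset G) (hN : S.IsNucleus N) :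
    ∀ (v : List X) (g : G), g ∈ N → S.resW g v ∈ N
  | [], _, hg => hg
  | x :: v, g, hg => resW_mem S N hN v (S.res g x) (hN.1 g hg x)

theorem inv_mem (S : SSA G X) (N : Finset G) (hN : S.IsNucleus N) {g : G} (hg : g ∈ N) :
    g⁻¹ ∈ N := by
  classical
  have hsub : N ⊆ N.image (·⁻¹) := by
    apply hN.2.2
    intro a
    obtain ⟨k, hk⟩ := hN.2.1 a⁻¹
    refine ⟨k, fun v hv => Finset.mem_image.mpr ⟨(S.resW a v)⁻¹, ?_, by simp⟩⟩
    rw [← resW_inv]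
    exact hk _ (by rw [actW_length]; exact hv)
  obtain ⟨b, hb, hbe⟩ := Finset.mem_image.mp (hsub hg)
  rw [← hbe, inv_inv]
  exact hb

theorem uniform (S : SSA G X) (N : Finset G) (hN : S.IsNucleus N) (F : Finset G) :
    ∃ k : ℕ, ∀ g ∈ F, ∀ v : List X, k ≤ v.length → S.resW g v ∈ N := by
  choose f hf using hN.2.1
  exact ⟨F.sup f, fun g hg v hv => hf g v (le_trans (Finset.le_sup hg) hv)⟩

def seg (w : ℕ → X) (i : ℕ) : ℕ → List X
  | 0 => []
  | k + 1 => w (i + k) :: seg w i k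

theorem seg_length (w : ℕ → X) (i : ℕ) : ∀ k, (seg w i k).length = k
  | 0 => rfl
  | k + 1 => by rw [seg, List.length_cons, seg_length]

theorem resW_seg (S : SSA G X) (w : ℕ → X) (q : ℕ → G)
    (hq : ∀ i, S.res (q (i + 1)) (w i) = q i) (i : ℕ) :
    ∀ k, S.resW (q (i + k)) (seg w i k) = q i
  | 0 => rfl
  | k + 1 => by
    rw [seg, resW_cons, show i + (k + 1) = (i + k) + 1 from rfl, hq (i + k)]
    exact resW_seg S w q hq i k

theorem states_mem (S : SSA G X) (N : Finset G) (hN : S.IsNucleus N) (F : Finset G)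
    (w : ℕ → X) (q : ℕ → G) (hmem : ∀ i, q i ∈ F)
    (hq : ∀ i, S.res (q (i + 1)) (w i) = q i) : ∀ i, q i ∈ N := by
  obtain ⟨k, hk⟩ := uniform S N hN F
  intro i
  rw [← resW_seg S w q hq i k]
  exact hk _ (hmem (i + k)) _ (by rw [seg_length])

/-! ### The equivalence relation -/

theorem limEquiv_refl (S : SSA G X) (N : Finset G) [Nonempty X] (hN : S.IsNucleus N)
    (w : ℕ → X) : LimEquiv S N w w :=
  ⟨1, fun _ => 1, rfl, fun _ => one_mem S N hN, fun i => ⟨S.res_one _, S.toFun_one _⟩⟩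

theorem limEquiv_symm (S : SSA G X) (N : Finset G) (hN : S.IsNucleus N) {w w' : ℕ → X} :
    LimEquiv S N w w' → LimEquiv S N w' w := by
  rintro ⟨h, q, hq0, hqN, hqe⟩
  refine ⟨h⁻¹, fun i => (q i)⁻¹, by show (q 0)⁻¹ = h⁻¹; rw [hq0], fun i => inv_mem S N hN (hqN i), fun i => ?_⟩
  constructor
  · rw [← (hqe i).2, res_inv, (hqe i).1]
  · rw [← (hqe i).2, toFun_inv]

theorem limEquiv_trans (S : SSA G X) (N : Finset G) (hN : S.IsNucleus N) {w w' w'' : ℕ → X} :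
    LimEquiv S N w w' → LimEquiv S N w' w'' → LimEquiv S N w w'' := by
  rintro ⟨h1, q1, h10, h1N, h1e⟩ ⟨h2, q2, h20, h2N, h2e⟩
  classical
  have hedge : ∀ i, S.res (q2 (i + 1) * q1 (i + 1)) (w i) = q2 i * q1 i := by
    intro i
    rw [S.res_mul, (h1e i).1, (h1e i).2, (h2e i).1]
  refine ⟨h2 * h1, fun i => q2 i * q1 i, by show q2 0 * q1 0 = h2 * h1; rw [h10, h20], ?_,
    fun i => ⟨hedge i, ?_⟩⟩
  · exact states_mem S N hN (N * N) w _
      (fun i => Finset.mul_mem_mul (h2N i) (h1N i)) hedge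
  · rw [S.toFun_mul, (h1e i).2, (h2e i).2]

theorem limEquiv_equivalence (S : SSA G X) (N : Finset G) [Nonempty X] (hN : S.IsNucleus N) :
    Equivalence (LimEquiv S N) :=
  ⟨limEquiv_refl S N hN, limEquiv_symm S N hN, limEquiv_trans S N hN⟩

theorem mk_eq_iff (S : SSA G X) (N : Finset G) [Nonempty X] (hN : S.IsNucleus N) {w w' : ℕ → X} :
    Quot.mk (LimEquiv S N) w = Quot.mk (LimEquiv S N) w' ↔ LimEquiv S N w w' :=
  ⟨fun h => (limEquiv_equivalence S N hN).eqvGen_iff.mp (Quot.eqvGen_exact h),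
   fun h => Quot.sound h⟩

/-! ### Cons of sequences -/

def cns {α : Type*} (x : α) (w : ℕ → α) : ℕ → α := fun i => Nat.casesOn i x w

@[simp] theorem cns_zero {α : Type*} (x : α) (w : ℕ → α) : cns x w 0 = x := rfl
@[simp] theorem cns_succ {α : Type*} (x : α) (w : ℕ → α) (j : ℕ) : cns x w (j + 1) = w j := rfl

/-! ### Chains: infinite self-paths through nontrivial nucleus states -/

def IsChain (S : SSA G X) (N : Finset G) (w : ℕ → X) (q : ℕ → G) : Prop :=
  ∀ j, (q j ∈ N ∧ q j ≠ 1) ∧ S.res (q (j + 1)) (w j) = q j ∧ S.toFun (q (j + 1)) (w j) = w j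

theorem chain_of_collision (S : SSA G X) (N : Finset G) {x y : X} {w : ℕ → X} (hxy : x ≠ y)
    (h : LimEquiv S N (cns x w) (cns y w)) : ∃ q, IsChain S N w q := by
  obtain ⟨h0, p, hp0, hpN, hpe⟩ := h
  have hdesc : ∀ t j, p (j + t) = 1 → p j = 1 := by
    intro t
    induction t with
    | zero => exact fun j h => h
    | succ t ih =>
      intro j h
      rw [show j + (t + 1) = (j + t) + 1 from rfl] at h
      exact ih j (by rw [← (hpe (j + t)).1, h, S.res_one])
  have hne : ∀ j, p (j + 1) ≠ 1 := by
    intro j hj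
    have h1 : p 1 = 1 := hdesc j 1 (by rw [Nat.add_comm 1 j]; exact hj)
    have h2 := (hpe 0).2
    rw [h1, S.toFun_one] at h2
    exact hxy h2
  exact ⟨fun j => p (j + 1), fun j =>
    ⟨⟨hpN _, hne j⟩, (hpe (j + 1)).1, (hpe (j + 1)).2⟩⟩

theorem chain_conj (S : SSA G X) (N : Finset G) (hN : S.IsNucleus N) {w w' : ℕ → X} {q : ℕ → G}
    (hq : IsChain S N w q) (h : LimEquiv S N w w') : ∃ q', IsChain S N w' q' := by
  classical
  obtain ⟨h0, p, hp0, hpN, hpe⟩ := h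
  have hedge : ∀ j, S.res (p (j+1) * q (j+1) * (p (j+1))⁻¹) (w' j) = p j * q j * (p j)⁻¹ := by
    intro j
    have hw' : w' j = S.toFun (p (j + 1)) (w j) := ((hpe j).2).symm
    rw [hw', S.res_mul (p (j+1) * q (j+1)) (p (j+1))⁻¹, toFun_inv, res_inv, S.res_mul,
      (hq j).2.2, (hq j).2.1, (hpe j).1]
  have htf : ∀ j, S.toFun (p (j+1) * q (j+1) * (p (j+1))⁻¹) (w' j) = w' j := by
    intro j
    have hw' : w' j = S.toFun (p (j + 1)) (w j) := ((hpe j).2).symm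
    rw [hw', S.toFun_mul (p (j+1) * q (j+1)) (p (j+1))⁻¹, toFun_inv, S.toFun_mul, (hq j).2.2]
  have hmem : ∀ j, p j * q j * (p j)⁻¹ ∈ N :=
    states_mem S N hN (N * N * N) w' _
      (fun j => Finset.mul_mem_mul (Finset.mul_mem_mul (hpN j) ((hq j).1.1))
        (inv_mem S N hN (hpN j))) hedge
  refine ⟨fun j => p j * q j * (p j)⁻¹, fun j => ⟨⟨hmem j, fun h1 => (hq j).1.2 ?_⟩,
    hedge j, htf j⟩⟩
  have h1' : p j * q j * (p j)⁻¹ = 1 := h1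
  have : q j = (p j)⁻¹ * (p j * q j * (p j)⁻¹) * p j := by group
  rw [this, h1']
  group

/-! ### The finite sets of fixed words -/

open Classical in
noncomputable def fixF (S : SSA G X) (N : Finset G) [Fintype X] : ℕ → G → Finset (List X)
  | 0, _ => {[]}
  | m + 1, h =>
      Finset.univ.biUnion fun z : X =>
        if S.toFun h z = z ∧ S.res h z ∈ N ∧ S.res h z ≠ 1 then
          (fixF S N m (S.res h z)).image (z :: ·)
        else ∅

theorem mem_fixF_succ {S : SSA G X} {N : Finset G} [Fintype X] {m : ℕ} {h : G} {v : List X} :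
    v ∈ fixF S N (m + 1) h ↔ ∃ z v', v = z :: v' ∧ S.toFun h z = z ∧ S.res h z ∈ N ∧
      S.res h z ≠ 1 ∧ v' ∈ fixF S N m (S.res h z) := by
  classical
  constructor
  · intro hv
    rw [fixF] at hv
    obtain ⟨z, -, hz⟩ := Finset.mem_biUnion.mp hv
    by_cases hc : S.toFun h z = z ∧ S.res h z ∈ N ∧ S.res h z ≠ 1
    · rw [if_pos hc] at hz
      obtain ⟨v', hv', rfl⟩ := Finset.mem_image.mp hz
      exact ⟨z, v', rfl, hc.1, hc.2.1, hc.2.2, hv'⟩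
    · rw [if_neg hc] at hz
      exact absurd hz (Finset.notMem_empty _)
  · rintro ⟨z, v', rfl, h1, h2, h3, hv'⟩
    rw [fixF]
    exact Finset.mem_biUnion.mpr ⟨z, Finset.mem_univ z, by
      rw [if_pos ⟨h1, h2, h3⟩]; exact Finset.mem_image.mpr ⟨v', hv', rfl⟩⟩

theorem length_of_mem_fixF {S : SSA G X} {N : Finset G} [Fintype X] :
    ∀ {m : ℕ} {h : G} {v : List X}, v ∈ fixF S N m h → v.length = m := by
  intro m
  induction m with
  | zero =>
    intro h v hv
    rw [fixF, Finset.mem_singleton] at hv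
    rw [hv]; rfl
  | succ m ih =>
    intro h v hv
    obtain ⟨z, v', rfl, -, -, -, hv'⟩ := mem_fixF_succ.mp hv
    rw [List.length_cons, ih hv']

theorem fixF_fixed {S : SSA G X} {N : Finset G} [Fintype X] :
    ∀ {m : ℕ} {h : G} {v : List X}, v ∈ fixF S N m h → S.actW h v = v := by
  intro m
  induction m with
  | zero =>
    intro h v hv
    rw [fixF, Finset.mem_singleton] at hv
    rw [hv]; rfl
  | succ m ih =>
    intro h v hv
    obtain ⟨z, v', rfl, h1, -, -, hv'⟩ := mem_fixF_succ.mp hv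
    rw [actW_cons, h1, ih hv']

theorem fixF_one {S : SSA G X} {N : Finset G} [Fintype X] (m : ℕ) :
    fixF S N (m + 1) (1 : G) = ∅ := by
  ext v
  simp only [Finset.notMem_empty, iff_false]
  intro hv
  obtain ⟨z, v', -, -, -, h3, -⟩ := mem_fixF_succ.mp hv
  exact h3 (S.res_one z)

theorem splitF {S : SSA G X} {N : Finset G} [Fintype X] :
    ∀ (m : ℕ) {m' : ℕ} {h : G} {v : List X}, v ∈ fixF S N (m + m') h →
      ∃ u u', v = u ++ u' ∧ u ∈ fixF S N m h ∧ u' ∈ fixF S N m' (S.resW h u) := by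
  intro m
  induction m with
  | zero =>
    intro m' h v hv
    rw [Nat.zero_add] at hv
    exact ⟨[], v, rfl, by rw [fixF]; exact Finset.mem_singleton_self [], hv⟩
  | succ m ih =>
    intro m' h v hv
    rw [show m + 1 + m' = (m + m') + 1 from by omega] at hv
    obtain ⟨z, v₂, rfl, h1, h2, h3, hv₂⟩ := mem_fixF_succ.mp hv
    obtain ⟨u₂, u', rfl, hu₂, hu'⟩ := ih hv₂
    exact ⟨z :: u₂, u', rfl, mem_fixF_succ.mpr ⟨z, u₂, rfl, h1, h2, h3, hu₂⟩, hu'⟩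

/-! ### Words read off a sequence -/

def wrd (w : ℕ → X) : ℕ → List X
  | 0 => []
  | m + 1 => w m :: wrd w m

theorem wrd_length (w : ℕ → X) : ∀ m, (wrd w m).length = m
  | 0 => rfl
  | m + 1 => by rw [wrd, List.length_cons, wrd_length]

theorem wrd_getElem (w : ℕ → X) :
    ∀ (m t : ℕ) (ht : t < (wrd w m).length), (wrd w m)[t] = w (m - 1 - t) := by
  intro m
  induction m with
  | zero => intro t ht; rw [wrd_length] at ht; omega
  | succ m ih =>
    intro t ht
    match t with
    | 0 => simp [wrd]
    | t + 1 =>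
      have hlt : t < (wrd w m).length := by rw [wrd_length] at ht ⊢; omega
      simp only [wrd, List.getElem_cons_succ]
      rw [ih t hlt]
      congr 1
      omega

theorem chain_mem_fixF {S : SSA G X} {N : Finset G} [Fintype X] {w : ℕ → X} {q : ℕ → G}
    (hq : IsChain S N w q) : ∀ m, wrd w m ∈ fixF S N m (q m) := by
  intro m
  induction m with
  | zero => rw [fixF]; exact Finset.mem_singleton_self []
  | succ m ih =>
    refine mem_fixF_succ.mpr ⟨w m, wrd w m, rfl, (hq m).2.2, ?_, ?_, ?_⟩
    · rw [(hq m).2.1]; exact (hq m).1.1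
    · rw [(hq m).2.1]; exact (hq m).1.2
    · rw [(hq m).2.1]; exact ih

theorem decode {S : SSA G X} {N : Finset G} [Fintype X] (w : ℕ → X) :
    ∀ (m : ℕ) (h : G), h ∈ N → wrd w m ∈ fixF S N m h →
    ∃ Q : ℕ → G, Q m = h ∧ (∀ j, j ≤ m → Q j ∈ N) ∧ (∀ j, j < m → Q j ∈ N ∧ Q j ≠ 1) ∧
      (∀ j, j < m → S.res (Q (j + 1)) (w j) = Q j ∧ S.toFun (Q (j + 1)) (w j) = w j) := by
  intro m
  induction m with
  | zero =>
    intro h hh _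
    exact ⟨fun _ => h, rfl, fun j _ => hh, fun j hj => absurd hj (by omega),
      fun j hj => absurd hj (by omega)⟩
  | succ m ih =>
    intro h hh hv
    rw [show wrd w (m + 1) = w m :: wrd w m from rfl] at hv
    obtain ⟨z, v', hzv, h1, h2, h3, hv'⟩ := mem_fixF_succ.mp hv
    obtain ⟨hz, hveq⟩ : w m = z ∧ wrd w m = v' := by
      injection hzv with e1 e2; exact ⟨e1, e2⟩
    subst hz
    rw [← hveq] at hv'
    obtain ⟨Q', hQ'm, hQ'le, hQ'lt, hQ'e⟩ := ih (S.res h (w m)) h2 hv'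
    classical
    refine ⟨fun j => if j = m + 1 then h else Q' j, by simp, ?_, ?_, ?_⟩
    · intro j hj
      by_cases hjm : j = m + 1
      · simp only [if_pos hjm]; exact hh
      · simp only [if_neg hjm]; exact hQ'le j (by omega)
    · intro j hj
      have hjm : j ≠ m + 1 := by omega
      simp only [if_neg hjm]
      rcases Nat.lt_succ_iff_lt_or_eq.mp hj with hlt | heq
      · exact hQ'lt j hlt
      · rw [heq, hQ'm]; exact ⟨h2, h3⟩
    · intro j hj
      rcases Nat.lt_succ_iff_lt_or_eq.mp hj with hlt | heq
      · have e1 : j + 1 ≠ m + 1 := by omega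
        have e2 : j ≠ m + 1 := by omega
        simp only [if_neg e1, if_neg e2]
        exact hQ'e j hlt
      · subst heq
        simp only [if_pos rfl, if_neg (show j ≠ j + 1 by omega)]
        rw [hQ'm]
        exact ⟨rfl, h1⟩

/-! ### Counting -/

open Classical in
noncomputable def allW (X : Type*) [Fintype X] : ℕ → Finset (List X)
  | 0 => {[]}
  | m + 1 => Finset.univ.biUnion fun z : X => (allW X m).image (z :: ·)

theorem mem_allW [Fintype X] : ∀ {m : ℕ} {v : List X}, v ∈ allW X m ↔ v.length = m := by
  classical
  intro m
  induction m with
  | zero =>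
    intro v
    rw [allW, Finset.mem_singleton]
    constructor
    · rintro rfl; rfl
    · intro h; exact List.length_eq_zero_iff.mp h
  | succ m ih =>
    intro v
    rw [allW, Finset.mem_biUnion]
    constructor
    · rintro ⟨z, -, hz⟩
      obtain ⟨v', hv', rfl⟩ := Finset.mem_image.mp hz
      rw [List.length_cons, ih.mp hv']
    · intro hv
      match v with
      | z :: v' =>
        exact ⟨z, Finset.mem_univ z, Finset.mem_image.mpr ⟨v', ih.mpr (by
          rw [List.length_cons] at hv; omega), rfl⟩⟩

theorem card_allW [Fintype X] : ∀ m : ℕ, (allW X m).card = Fintype.card X ^ m := by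
  classical
  intro m
  induction m with
  | zero => rw [allW]; simp
  | succ m ih =>
    rw [allW, Finset.card_biUnion]
    · simp only [Finset.card_image_of_injective _ (fun a b h => (List.cons.injEq _ _ _ _).mp h
        |>.2), ih]
      rw [Finset.sum_const, Finset.card_univ, smul_eq_mul, pow_succ, mul_comm]
    · intro a _ b _ hab
      simp only [Function.onFun]
      rw [Finset.disjoint_left]
      intro v hv hv'
      obtain ⟨va, -, rfl⟩ := Finset.mem_image.mp hv
      obtain ⟨vb, -, he⟩ := Finset.mem_image.mp hv'
      exact hab (((List.cons.injEq _ _ _ _).mp he).1.symm)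

theorem card_fixF_le_of_notfix {S : SSA G X} {N : Finset G} [Fintype X] {h : G} {L : ℕ}
    {vh : List X} (hvh : vh.length = L) (hfix : S.actW h vh ≠ vh) :
    (fixF S N L h).card ≤ Fintype.card X ^ L - 1 := by
  classical
  have hsub : fixF S N L h ⊆ (allW X L).erase vh := by
    intro v hv
    refine Finset.mem_erase.mpr ⟨?_, mem_allW.mpr (length_of_mem_fixF hv)⟩
    rintro rfl
    exact hfix (fixF_fixed hv)
  calc (fixF S N L h).card ≤ ((allW X L).erase vh).card := Finset.card_le_card hsub
    _ = (allW X L).card - 1 := Finset.card_erase_of_mem (mem_allW.mpr hvh)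
    _ = Fintype.card X ^ L - 1 := by rw [card_allW]

theorem card_fixF_pow {S : SSA G X} {N : Finset G} [Fintype X] (hN : S.IsNucleus N) {L : ℕ}
    (hL : 0 < L)
    (hvex : ∀ h ∈ N, h ≠ 1 → ∃ vh : List X, vh.length = L ∧ S.actW h vh ≠ vh) :
    ∀ (k : ℕ), ∀ h ∈ N, (fixF S N (k * L) h).card ≤ (Fintype.card X ^ L - 1) ^ k := by
  classical
  intro k
  induction k with
  | zero =>
    intro h _
    rw [Nat.zero_mul, fixF]
    simp
  | succ k ih =>
    intro h hh
    have hstep : (fixF S N L h).card ≤ Fintype.card X ^ L - 1 := by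
      by_cases h1 : h = 1
      · subst h1
        obtain ⟨L', rfl⟩ : ∃ L', L = L' + 1 := ⟨L - 1, by omega⟩
        rw [fixF_one]
        simp
      · obtain ⟨vh, hv1, hv2⟩ := hvex h hh h1
        exact card_fixF_le_of_notfix hv1 hv2
    have hsub : fixF S N ((k + 1) * L) h ⊆
        (fixF S N L h).biUnion fun u => (fixF S N (k * L) (S.resW h u)).image (u ++ ·) := by
      intro v hv
      rw [show (k + 1) * L = L + k * L from by ring] at hv
      obtain ⟨u, u', rfl, hu, hu'⟩ := splitF L hv
      exact Finset.mem_biUnion.mpr ⟨u, hu, Finset.mem_image.mpr ⟨u', hu', rfl⟩⟩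
    calc (fixF S N ((k + 1) * L) h).card
        ≤ ((fixF S N L h).biUnion fun u =>
            (fixF S N (k * L) (S.resW h u)).image (u ++ ·)).card :=
          Finset.card_le_card hsub
      _ ≤ ∑ u ∈ fixF S N L h, ((fixF S N (k * L) (S.resW h u)).image (u ++ ·)).card :=
          Finset.card_biUnion_le
      _ ≤ ∑ _u ∈ fixF S N L h, (Fintype.card X ^ L - 1) ^ k := by
          refine Finset.sum_le_sum fun u _ => ?_
          exact le_trans Finset.card_image_le (ih _ (resW_mem S N hN u h hh))
      _ = (fixF S N L h).card * (Fintype.card X ^ L - 1) ^ k := by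
          rw [Finset.sum_const, smul_eq_mul]
      _ ≤ (Fintype.card X ^ L - 1) * (Fintype.card X ^ L - 1) ^ k :=
          Nat.mul_le_mul_right _ hstep
      _ = (Fintype.card X ^ L - 1) ^ (k + 1) := (pow_succ' _ _).symm

/-! ### The exceptional set -/

def WbadS (S : SSA G X) (N : Finset G) [Fintype X] (m : ℕ) : Set (ℕ → X) :=
  ⋃ h ∈ N, ⋃ v ∈ fixF S N m h, Cyl (v.reverse)

def Wset (S : SSA G X) (N : Finset G) [Fintype X] : Set (ℕ → X) :=
  ⋂ m, WbadS S N m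

theorem mem_cyl_reverse_wrd (w : ℕ → X) (m : ℕ) : w ∈ Cyl ((wrd w m).reverse) := by
  intro i hi
  have hi2 : i < m := by rw [List.length_reverse, wrd_length] at hi; exact hi
  rw [List.get_eq_getElem, List.getElem_reverse, wrd_getElem]
  congr 1
  show i = m - 1 - ((wrd w m).length - 1 - i)
  rw [wrd_length]
  omega

theorem cyl_unique {w : ℕ → X} {u₁ u₂ : List X} (hlen : u₁.length = u₂.length)
    (h1 : w ∈ Cyl u₁) (h2 : w ∈ Cyl u₂) : u₁ = u₂ := by
  apply List.ext_get hlen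
  intro i ha hb
  rw [← h1 i ha, ← h2 i hb]

theorem eq_wrd_of_mem_cyl {w : ℕ → X} {m : ℕ} {v : List X} (hv : v.length = m)
    (hc : w ∈ Cyl v.reverse) : v = wrd w m := by
  apply List.reverse_injective
  refine cyl_unique ?_ hc (mem_cyl_reverse_wrd w m)
  rw [List.length_reverse, List.length_reverse, wrd_length, hv]

theorem mem_Wset_of_chain {S : SSA G X} {N : Finset G} [Fintype X] {w : ℕ → X} {q : ℕ → G}
    (hq : IsChain S N w q) : w ∈ Wset S N := by
  refine Set.mem_iInter.mpr fun m => ?_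
  exact Set.mem_iUnion₂.mpr ⟨q m, (hq m).1.1,
    Set.mem_iUnion₂.mpr ⟨wrd w m, chain_mem_fixF hq m, mem_cyl_reverse_wrd w m⟩⟩

theorem chain_of_mem_Wset {S : SSA G X} {N : Finset G} [Fintype X] {w : ℕ → X}
    (hw : w ∈ Wset S N) : ∃ q, IsChain S N w q := by
  classical
  have hm : ∀ m : ℕ, ∃ Q : ℕ → G, (∀ j, j ≤ m → Q j ∈ N) ∧
      (∀ j, j < m → Q j ∈ N ∧ Q j ≠ 1) ∧
      (∀ j, j < m → S.res (Q (j + 1)) (w j) = Q j ∧ S.toFun (Q (j + 1)) (w j) = w j) := by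
    intro m
    have h1 := Set.mem_iInter.mp hw m
    obtain ⟨h, hhN, hrest⟩ := Set.mem_iUnion₂.mp h1
    obtain ⟨v, hv, hcyl⟩ := Set.mem_iUnion₂.mp hrest
    have hveq := eq_wrd_of_mem_cyl (length_of_mem_fixF hv) hcyl
    rw [hveq] at hv
    obtain ⟨Q, -, hle, hlt, he⟩ := decode w m h hhN hv
    exact ⟨Q, hle, hlt, he⟩
  choose Q hQ1 hQ2 hQ3 using hm
  set U : Ultrafilter ℕ := Filter.hyperfilter ℕ with hU
  have hbig : ∀ j : ℕ, {m | j < m} ∈ U := by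
    intro j
    apply Filter.mem_hyperfilter_of_finite_compl
    have : {m | j < m}ᶜ = {m | m ≤ j} := by ext m; simp
    rw [this]
    exact Set.finite_le_nat j
  have hsel : ∀ j : ℕ, ∃ g ∈ N, {m | Q m j = g} ∈ U := by
    intro j
    have hsub : {m | j < m} ⊆ ⋃ g ∈ (N : Set G), {m | Q m j = g} := by
      intro m hm'
      exact Set.mem_iUnion₂.mpr ⟨Q m j, hQ1 m j (le_of_lt hm'), rfl⟩
    have hmem : (⋃ g ∈ (N : Set G), {m | Q m j = g}) ∈ U :=
      Filter.mem_of_superset (hbig j) hsub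
    obtain ⟨g, hg, hgU⟩ := (Ultrafilter.finite_biUnion_mem_iff (N.finite_toSet)).mp hmem
    exact ⟨g, hg, hgU⟩
  choose q hqN hqU using hsel
  refine ⟨q, fun j => ?_⟩
  have hmem : ({m | Q m j = q j} ∩ {m | Q m (j + 1) = q (j + 1)} ∩ {m | j + 1 < m}) ∈ U :=
    Filter.inter_mem (Filter.inter_mem (hqU j) (hqU (j + 1))) (hbig (j + 1))
  obtain ⟨m, ⟨⟨e1, e2⟩, hjm⟩⟩ := Filter.nonempty_of_mem hmem
  simp only [Set.mem_setOf_eq] at e1 e2 hjm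
  refine ⟨?_, ?_, ?_⟩
  · rw [← e1]; exact hQ2 m j (by omega)
  · rw [← e1, ← e2]; exact (hQ3 m j (by omega)).1
  · rw [← e2]; exact (hQ3 m j (by omega)).2

/-! ### The σ-algebra on `X` is discrete -/

theorem mem_cyl_single [MeasurableSpace X] (z : X) (w : ℕ → X) : w ∈ Cyl [z] ↔ w 0 = z := by
  constructor
  · intro h
    exact h 0 (by simp)
  · intro h i hi
    have : i = 0 := Nat.lt_one_iff.mp (by simpa using hi)
    subst this
    simpa using h

theorem msing_of_cylMeasure [Fintype X] [Nonempty X] [MeasurableSpace X]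
    (μ0 : Measure (ℕ → X))
    (hμ0 : ∀ u : List X, μ0 (Cyl u) = ((Fintype.card X : ℝ≥0∞))⁻¹ ^ u.length) (x : X) :
    MeasurableSet ({x} : Set X) := by
  classical
  have hCylnil : Cyl ([] : List X) = Set.univ := by
    ext w
    simp [Cyl]
  have huniv : μ0 Set.univ = 1 := by
    rw [← hCylnil, hμ0]
    simp
  set n := Fintype.card X with hn
  set c : ℝ≥0∞ := ((n : ℝ≥0∞))⁻¹ with hc
  have hn0 : n ≠ 0 := Fintype.card_ne_zero
  have hc0 : c ≠ 0 := ENNReal.inv_ne_zero.mpr (ENNReal.natCast_ne_top n)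
  have hct : c ≠ ∞ := ENNReal.inv_ne_top.mpr (by exact_mod_cast hn0)
  have hsingle : ∀ z : X, μ0 (Cyl [z]) = c := by
    intro z
    rw [hμ0]
    simp
  have sep : ∀ y : X, y ≠ x → ∃ M : Set X, MeasurableSet M ∧ x ∈ M ∧ y ∉ M := by
    intro y hyx
    by_contra hno
    push_neg at hno
    have hiff : ∀ M : Set X, MeasurableSet M → (x ∈ M ↔ y ∈ M) := by
      intro M hM
      constructor
      · exact hno M hM
      · intro hy
        by_contra hx
        exact (hno Mᶜ hM.compl hx) hy
    have hcard2 : 2 ≤ n := Fintype.one_lt_card_iff_nontrivial.mpr ⟨⟨x, y, (Ne.symm hyx)⟩⟩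
    set τ : (ℕ → X) → (ℕ → X) := fun w i => Equiv.swap x y (w i) with hτdef
    have hswap : ∀ M : Set X, MeasurableSet M → Equiv.swap x y ⁻¹' M = M := by
      intro M hM
      ext z
      simp only [Set.mem_preimage]
      rcases eq_or_ne z x with rfl | hzx
      · rw [Equiv.swap_apply_left]
        exact ((hiff M hM).symm)
      rcases eq_or_ne z y with rfl | hzy
      · rw [Equiv.swap_apply_right]
        exact hiff M hM
      · rw [Equiv.swap_apply_of_ne_of_ne hzx hzy]
    have hinv : ∀ T : Set (ℕ → X), MeasurableSet T → τ ⁻¹' T = T := by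
      set m' : MeasurableSpace (ℕ → X) :=
        { MeasurableSet' := fun T => MeasurableSet T ∧ τ ⁻¹' T = T
          measurableSet_empty := ⟨MeasurableSet.empty, by simp⟩
          measurableSet_compl := fun T hT => ⟨hT.1.compl, by
            rw [Set.preimage_compl, hT.2]⟩
          measurableSet_iUnion := fun f hf =>
            ⟨MeasurableSet.iUnion fun i => (hf i).1, by
              rw [Set.preimage_iUnion]
              exact Set.iUnion_congr fun i => (hf i).2⟩ }
      have hle : (MeasurableSpace.pi : MeasurableSpace (ℕ → X)) ≤ m' := by
        refine iSup_le fun i => ?_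
        refine (MeasurableSpace.gc_comap_map (fun w : ℕ → X => w i)).l_le ?_
        intro M hM
        show m'.MeasurableSet' ((fun w : ℕ → X => w i) ⁻¹' M)
        refine ⟨(measurable_pi_apply i) hM, ?_⟩
        have he : τ ⁻¹' ((fun w : ℕ → X => w i) ⁻¹' M) =
            (fun w : ℕ → X => w i) ⁻¹' (Equiv.swap x y ⁻¹' M) := rfl
        rw [he, hswap M hM]
      exact fun T hT => (hle T hT).2
    set t := toMeasurable μ0 (Cyl [x]) with ht
    have htm : MeasurableSet t := measurableSet_toMeasurable μ0 _
    have htsub : Cyl [x] ⊆ t := subset_toMeasurable μ0 _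
    have htx : μ0 t = c := by rw [measure_toMeasurable]; exact hsingle x
    have hty : Cyl [y] ⊆ t := by
      have h1 : τ ⁻¹' (Cyl [x]) = Cyl [y] := by
        ext w
        simp only [Set.mem_preimage, mem_cyl_single]
        show Equiv.swap x y (w 0) = x ↔ w 0 = y
        constructor
        · intro h
          have h2 := congrArg (Equiv.swap x y) h
          rwa [Equiv.swap_apply_self, Equiv.swap_apply_left] at h2
        · intro h
          rw [h, Equiv.swap_apply_right]
      calc Cyl [y] = τ ⁻¹' (Cyl [x]) := h1.symm
        _ ⊆ τ ⁻¹' t := Set.preimage_mono htsub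
        _ = t := hinv t htm
    have htc : μ0 tᶜ ≤ ((n - 2 : ℕ) : ℝ≥0∞) * c := by
      have hsub : tᶜ ⊆ ⋃ z ∈ ((Finset.univ.erase x).erase y), Cyl [z] := by
        intro w hw
        have hwx : w 0 ≠ x := fun h => hw (htsub ((mem_cyl_single x w).mpr h))
        have hwy : w 0 ≠ y := fun h => hw (hty ((mem_cyl_single y w).mpr h))
        exact Set.mem_biUnion
          (Finset.mem_erase.mpr ⟨hwy, Finset.mem_erase.mpr ⟨hwx, Finset.mem_univ _⟩⟩)
          ((mem_cyl_single _ w).mpr rfl)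
      calc μ0 tᶜ ≤ ∑ z ∈ (Finset.univ.erase x).erase y, μ0 (Cyl [z]) :=
            le_trans (measure_mono hsub) (measure_biUnion_finset_le _ _)
        _ = (((Finset.univ.erase x).erase y).card : ℝ≥0∞) * c := by
            simp only [hsingle]
            rw [Finset.sum_const, nsmul_eq_mul]
        _ = ((n - 2 : ℕ) : ℝ≥0∞) * c := by
            congr 2
            rw [Finset.card_erase_of_mem (Finset.mem_erase.mpr ⟨hyx, Finset.mem_univ y⟩),
              Finset.card_erase_of_mem (Finset.mem_univ x), Finset.card_univ]
            omega
    have hsum : μ0 t + μ0 tᶜ = 1 := by rw [measure_add_measure_compl htm, huniv]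
    have h1 : (1 : ℝ≥0∞) ≤ ((n - 1 : ℕ) : ℝ≥0∞) * c := by
      calc (1 : ℝ≥0∞) = μ0 t + μ0 tᶜ := hsum.symm
        _ ≤ c + ((n - 2 : ℕ) : ℝ≥0∞) * c := add_le_add (le_of_eq htx) htc
        _ = ((n - 1 : ℕ) : ℝ≥0∞) * c := by
            have hcast : (1 : ℝ≥0∞) + ((n - 2 : ℕ) : ℝ≥0∞) = ((n - 1 : ℕ) : ℝ≥0∞) := by
              rw [← Nat.cast_one, ← Nat.cast_add]
              congr 1
              omega
            calc c + ((n - 2 : ℕ) : ℝ≥0∞) * c = (1 + ((n - 2 : ℕ) : ℝ≥0∞)) * c := by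
                  rw [add_mul, one_mul]
              _ = ((n - 1 : ℕ) : ℝ≥0∞) * c := by rw [hcast]
    have h2 : ((n - 1 : ℕ) : ℝ≥0∞) * c < 1 := by
      have hnc : ((n : ℕ) : ℝ≥0∞) * c = 1 :=
        ENNReal.mul_inv_cancel (by exact_mod_cast hn0) (ENNReal.natCast_ne_top n)
      rw [← hnc]
      refine ENNReal.mul_lt_mul_left hc0 hct ?_
      exact_mod_cast (by omega : n - 1 < n)
    exact absurd (lt_of_le_of_lt h1 h2) (lt_irrefl 1)
  have hM : ∀ y : X, ∃ M : Set X, MeasurableSet M ∧ x ∈ M ∧ (y ≠ x → y ∉ M) := by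
    intro y
    by_cases hy : y = x
    · exact ⟨Set.univ, MeasurableSet.univ, trivial, fun h => absurd hy h⟩
    · obtain ⟨M, h1, h2, h3⟩ := sep y hy
      exact ⟨M, h1, h2, fun _ => h3⟩
  choose M hM1 hM2 hM3 using hM
  have hxeq : ({x} : Set X) = ⋂ y, M y := by
    ext z
    simp only [Set.mem_singleton_iff, Set.mem_iInter]
    constructor
    · rintro rfl y; exact hM2 y
    · intro h
      by_contra hz
      exact hM3 z hz (h z)
  rw [hxeq]
  exact MeasurableSet.iInter fun y => hM1 y

theorem measurableSet_cyl [MeasurableSpace X]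
    (msing : ∀ x : X, MeasurableSet ({x} : Set X)) (u : List X) :
    MeasurableSet (Cyl u) := by
  have he : Cyl u = ⋂ i : Fin u.length, (fun w : ℕ → X => w i) ⁻¹' {u.get i} := by
    ext w
    simp only [Cyl, Set.mem_setOf_eq, Set.mem_iInter, Set.mem_preimage, Set.mem_singleton_iff]
    constructor
    · intro h i
      exact h i i.2
    · intro h i hi
      exact h ⟨i, hi⟩
  rw [he]
  exact MeasurableSet.iInter fun i => (measurable_pi_apply _) (msing _)

theorem measurableSet_Wset {S : SSA G X} {N : Finset G} [Fintype X] [MeasurableSpace X]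
    (msing : ∀ x : X, MeasurableSet ({x} : Set X)) : MeasurableSet (Wset S N) := by
  refine MeasurableSet.iInter fun m => ?_
  refine Finset.measurableSet_biUnion _ fun h _ => ?_
  exact Finset.measurableSet_biUnion _ fun v _ => measurableSet_cyl msing _

/-! ### The exceptional set is null -/

theorem measure_Wset_zero {S : SSA G X} {N : Finset G} [Fintype X] [Nonempty X]
    [MeasurableSpace X] (hN : S.IsNucleus N)
    (hfaith : ∀ h ∈ N, h ≠ 1 → ∃ v : List X, S.actW h v ≠ v)
    (μ0 : Measure (ℕ → X))
    (hμ0 : ∀ u : List X, μ0 (Cyl u) = ((Fintype.card X : ℝ≥0∞))⁻¹ ^ u.length) :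
    μ0 (Wset S N) = 0 := by
  classical
  -- choose a uniform length L
  obtain ⟨L, hL, hvex⟩ : ∃ L : ℕ, 0 < L ∧
      ∀ h ∈ N, h ≠ 1 → ∃ vh : List X, vh.length = L ∧ S.actW h vh ≠ vh := by
    set f : G → List X := fun h =>
      if hh : h ∈ N ∧ h ≠ 1 then Classical.choose (hfaith h hh.1 hh.2) else [] with hf
    refine ⟨max 1 (N.sup fun h => (f h).length), lt_of_lt_of_le one_pos (le_max_left _ _),
      fun h hh h1 => ?_⟩
    have hfh : S.actW h (f h) ≠ f h := by
      rw [hf]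
      simp only [dif_pos (And.intro hh h1)]
      exact Classical.choose_spec (hfaith h hh h1)
    refine ⟨f h ++ List.replicate (max 1 (N.sup fun h => (f h).length) - (f h).length)
      (Classical.arbitrary X), ?_, actW_prefix_ne S hfh _⟩
    rw [List.length_append, List.length_replicate]
    have hle : (f h).length ≤ N.sup fun h => (f h).length :=
      Finset.le_sup (f := fun h => (f h).length) hh
    have := le_max_right 1 (N.sup fun h => (f h).length)
    omega
  set n := Fintype.card X with hn
  set c : ℝ≥0∞ := ((n : ℝ≥0∞))⁻¹ with hc
  set B : ℕ := n ^ L - 1 with hB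
  have hn0 : n ≠ 0 := Fintype.card_ne_zero
  have hM0 : 0 < n ^ L := Nat.pow_pos (Nat.pos_of_ne_zero hn0)
  set r : ℝ≥0∞ := (B : ℝ≥0∞) * c ^ L with hr
  -- the key bound
  have key : ∀ k : ℕ, μ0 (Wset S N) ≤ (N.card : ℝ≥0∞) * r ^ k := by
    intro k
    have h1 : μ0 (Wset S N) ≤ μ0 (WbadS S N (k * L)) := measure_mono (Set.iInter_subset _ _)
    have h2 : μ0 (WbadS S N (k * L)) ≤
        ∑ h ∈ N, ∑ v ∈ fixF S N (k * L) h, μ0 (Cyl v.reverse) := by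
      refine le_trans (measure_biUnion_finset_le _ _) (Finset.sum_le_sum fun h _ => ?_)
      exact measure_biUnion_finset_le _ _
    have h3 : ∀ h ∈ N, ∀ v ∈ fixF S N (k * L) h, μ0 (Cyl v.reverse) = c ^ (k * L) := by
      intro h _ v hv
      rw [hμ0, List.length_reverse, length_of_mem_fixF hv]
    have h4 : μ0 (WbadS S N (k * L)) ≤ ∑ h ∈ N, ((B : ℝ≥0∞) ^ k) * c ^ (k * L) := by
      refine le_trans h2 (Finset.sum_le_sum fun h hh => ?_)
      rw [Finset.sum_congr rfl (h3 h hh), Finset.sum_const, nsmul_eq_mul]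
      refine mul_le_mul_left ?_ _
      have hcard := card_fixF_pow hN hL hvex k h hh
      calc ((fixF S N (k * L) h).card : ℝ≥0∞) ≤ ((B ^ k : ℕ) : ℝ≥0∞) := by exact_mod_cast hcard
        _ = (B : ℝ≥0∞) ^ k := by push_cast; ring
    have h5 : (∑ _h ∈ N, ((B : ℝ≥0∞) ^ k) * c ^ (k * L)) = (N.card : ℝ≥0∞) * r ^ k := by
      rw [Finset.sum_const, nsmul_eq_mul]
      congr 1
      rw [hr, mul_pow, ← pow_mul, Nat.mul_comm L k]
    exact le_trans h1 (le_trans h4 (le_of_eq h5))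
  -- r < 1
  have hrlt : r < 1 := by
    have hcL : c ^ L = (((n ^ L : ℕ) : ℝ≥0∞))⁻¹ := by
      rw [hc, ← ENNReal.inv_pow]
      congr 1
      push_cast
      ring
    rw [hr, hcL, ← div_eq_mul_inv,
      ENNReal.div_lt_iff (Or.inl (by exact_mod_cast hM0.ne')) (Or.inl (ENNReal.natCast_ne_top _)),
      one_mul]
    exact_mod_cast Nat.sub_lt hM0 one_pos
  have htend : Filter.Tendsto (fun k : ℕ => (N.card : ℝ≥0∞) * r ^ k) Filter.atTop (nhds 0) := by
    have h0 := ENNReal.tendsto_pow_atTop_nhds_zero_of_lt_one hrlt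
    have h1 := ENNReal.Tendsto.const_mul h0 (Or.inr (ENNReal.natCast_ne_top N.card))
    simpa using h1
  have : μ0 (Wset S N) ≤ 0 := ge_of_tendsto' htend key
  exact le_antisymm this zero_le

/-! ### Preimages under the shift -/

theorem preimage_eq (S : SSA G X) (N : Finset G) [Nonempty X] (hN : S.IsNucleus N)
    (s : Quot (LimEquiv S N) → Quot (LimEquiv S N))
    (hs : ∀ w : ℕ → X,
      s (Quot.mk (LimEquiv S N) w) = Quot.mk (LimEquiv S N) (fun i => w (i + 1)))
    (w : ℕ → X) :
    {y | s y = Quot.mk (LimEquiv S N) w} =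
      Set.range (fun x : X => Quot.mk (LimEquiv S N) (cns x w)) := by
  ext y
  simp only [Set.mem_setOf_eq, Set.mem_range]
  constructor
  · intro hy
    obtain ⟨u, rfl⟩ := Quot.exists_rep y
    rw [hs u] at hy
    obtain ⟨h, q, hq0, hqN, hqe⟩ := (mk_eq_iff S N hN).mp hy
    refine ⟨S.toFun (q 0) (u 0), ?_⟩
    refine ((mk_eq_iff S N hN).mpr ?_).symm
    refine ⟨S.res (q 0) (u 0), cns (S.res (q 0) (u 0)) q, rfl, ?_, ?_⟩
    · intro i
      match i with
      | 0 => exact hN.1 _ (hqN 0) _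
      | j + 1 => exact hqN j
    · intro i
      match i with
      | 0 => exact ⟨rfl, rfl⟩
      | j + 1 => exact ⟨(hqe j).1, (hqe j).2⟩
  · rintro ⟨x, rfl⟩
    rw [hs (cns x w)]
    rfl

theorem encard_of_not_mem {S : SSA G X} {N : Finset G} [Fintype X] [Nonempty X]
    (hN : S.IsNucleus N)
    (s : Quot (LimEquiv S N) → Quot (LimEquiv S N))
    (hs : ∀ w : ℕ → X,
      s (Quot.mk (LimEquiv S N) w) = Quot.mk (LimEquiv S N) (fun i => w (i + 1)))
    {w : ℕ → X} (hw : w ∉ Wset S N) :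
    {y | s y = Quot.mk (LimEquiv S N) w}.encard = (Fintype.card X : ℕ∞) := by
  rw [preimage_eq S N hN s hs w, ← Set.image_univ]
  have hinj : Set.InjOn (fun x : X => Quot.mk (LimEquiv S N) (cns x w)) Set.univ := by
    intro a _ b _ hab
    by_contra hne
    have hLE := (mk_eq_iff S N hN).mp hab
    obtain ⟨q, hq⟩ := chain_of_collision S N hne hLE
    exact hw (mem_Wset_of_chain hq)
  rw [Set.InjOn.encard_image hinj, Set.encard_univ]
  exact ENat.card_eq_coe_fintype_card

theorem Wset_saturated {S : SSA G X} {N : Finset G} [Fintype X] [Nonempty X]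
    (hN : S.IsNucleus N) :
    Quot.mk (LimEquiv S N) ⁻¹' (Quot.mk (LimEquiv S N) '' Wset S N) = Wset S N := by
  apply Set.Subset.antisymm
  · rintro w' hw'
    obtain ⟨w, hw, he⟩ := hw'
    obtain ⟨q, hq⟩ := chain_of_mem_Wset hw
    obtain ⟨q', hq'⟩ := chain_conj S N hN hq ((mk_eq_iff S N hN).mp he)
    exact mem_Wset_of_chain hq'
  · exact Set.subset_preimage_image _ _



end Stmt17

/-- For a contracting faithful self-similar action with limit space `J = X^{-ω}/~`, the induced
shift map `s` and the self-similar measure `m` (push-forward of the uniform Bernoulli measure):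
`m`-almost every point of `J` has exactly `|X|` preimages under `s`. -/
theorem stmt_17 {G X : Type*} [Group G] [Fintype X] [Nonempty X] [MeasurableSpace X]
    (S : SSA G X) (N : Finset G) (hN : S.IsNucleus N)
    (hfaith : ∀ h ∈ N, h ≠ 1 → ∃ v : List X, S.actW h v ≠ v)
    (μ0 : Measure (ℕ → X))
    (hμ0 : ∀ u : List X, μ0 (Cyl u) = ((Fintype.card X : ℝ≥0∞))⁻¹ ^ u.length)
    (s : Quot (LimEquiv S N) → Quot (LimEquiv S N))
    (hs : ∀ w : ℕ → X,
      s (Quot.mk (LimEquiv S N) w) = Quot.mk (LimEquiv S N) (fun i => w (i + 1))) :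
    ∀ᵐ x ∂(Measure.map (Quot.mk (LimEquiv S N)) μ0),
      {y : Quot (LimEquiv S N) | s y = x}.encard = (Fintype.card X : ℕ∞) := by
  classical
  have msing : ∀ x : X, MeasurableSet ({x} : Set X) :=
    Stmt17.msing_of_cylMeasure μ0 hμ0
  rw [MeasureTheory.ae_iff]
  set B : Set (Quot (LimEquiv S N)) := Quot.mk (LimEquiv S N) '' (Stmt17.Wset S N) with hBdef
  have hBm : MeasurableSet B := by
    show MeasurableSet (Quot.mk (LimEquiv S N) ⁻¹' B)
    rw [hBdef, Stmt17.Wset_saturated hN]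
    exact Stmt17.measurableSet_Wset msing
  have hsub : {x | ¬ {y : Quot (LimEquiv S N) | s y = x}.encard = (Fintype.card X : ℕ∞)} ⊆ B := by
    intro ξ hξ
    obtain ⟨w, rfl⟩ := Quot.exists_rep ξ
    by_cases hw : w ∈ Stmt17.Wset S N
    · exact ⟨w, hw, rfl⟩
    · exact absurd (Stmt17.encard_of_not_mem hN s hs hw) hξ
  have hmap : (Measure.map (Quot.mk (LimEquiv S N)) μ0) B = 0 := by
    rw [Measure.map_apply measurable_quot_mk hBm, hBdef, Stmt17.Wset_saturated hN]
    exact Stmt17.measure_Wset_zero hN hfaith μ0 hμ0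
  exact le_antisymm (le_trans (measure_mono hsub) (le_of_eq hmap)) zero_le
end

section
/- Let Γ be a finite strictly right-resolving labeled graph over a finite alphabet X containing a vertex v₀ such that from every vertex there is a path to v₀, and for each x ∈ X there is a loop at v₀ labeled x. Then the measure number of Γ equals 1, i.e., Σ_v μ_p(F_v) = 1 for any Bernoulli measure μ_p with positive letter probabilities. -/
open MeasureTheory ENNReal
/-- The left-infinite sequence `w = ...x₂x₁` (with `w 0 = x₁` the rightmost letter)
ends at the vertex `v` of the `X`-labeled directed graph with edge relation `E`:
there is a left-infinite path `...e₂e₁` ending at `v` whose `i`-th edge is labeled `xᵢ`. -/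
def EndsInf {V X : Type*} (E : V → X → V → Prop) (w : ℕ → X) (v : V) : Prop :=
  ∃ p : ℕ → V, p 0 = v ∧ ∀ i : ℕ, E (p (i + 1)) (w i) (p i)

/-- The finite word `u = xₙ...x₂x₁` (encoded as the list `[x₁, x₂, ..., xₙ]`, head = rightmost
letter) ends at the vertex `v`: some finite path ending at `v` is labeled by `u`. -/
def EndsFin {V X : Type*} (E : V → X → V → Prop) (u : List X) (v : V) : Prop :=
  ∃ p : ℕ → V, p 0 = v ∧ ∀ (i : ℕ) (h : i < u.length), E (p (i + 1)) (u.get ⟨i, h⟩) (p i)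

/-- The right-infinite sequence `w = x₁x₂...` (with `w 0 = x₁` the first letter) starts at the
vertex `v`: there is a right-infinite path starting at `v` labeled by `w`. -/
def StartsInf {V X : Type*} (E : V → X → V → Prop) (w : ℕ → X) (v : V) : Prop :=
  ∃ p : ℕ → V, p 0 = v ∧ ∀ i : ℕ, E (p i) (w i) (p (i + 1))

/-- The graph is right-resolving: the outgoing edges at each vertex have distinct labels. -/
def RightResolving {V X : Type*} (E : V → X → V → Prop) : Prop :=
  ∀ v x u u', E v x u → E v x u' → u = u'

section Aux
variable {V X : Type*} (E : V → X → V → Prop) (hsrr : ∀ (v : V) (x : X), ∃! u : V, E v x u)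

/-- The unique transition function of a strictly right-resolving graph. -/
noncomputable def dstep (v : V) (x : X) : V := (hsrr v x).choose

lemma dstep_edge (v : V) (x : X) : E v x (dstep E hsrr v x) := (hsrr v x).choose_spec.1

lemma dstep_eq {v : V} {x : X} {u : V} (h : E v x u) : dstep E hsrr v x = u :=
  ((hsrr v x).choose_spec.2 u h).symm

/-- Reading a word (last list entry applied first). -/
noncomputable def steps (q : V) : List X → V
  | [] => q
  | x :: t => dstep E hsrr (steps q t) x

@[simp] lemma steps_nil (q : V) : steps E hsrr q [] = q := rfl

@[simp] lemma steps_cons (q : V) (x : X) (t : List X) :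
    steps E hsrr q (x :: t) = dstep E hsrr (steps E hsrr q t) x := rfl

lemma steps_append (q : V) (a b : List X) :
    steps E hsrr q (a ++ b) = steps E hsrr (steps E hsrr q b) a := by
  induction a with
  | nil => simp
  | cons x a ih => simp [ih]

lemma steps_unique (t : List X) (pth : ℕ → V)
    (h : ∀ (i : ℕ) (hi : i < t.length), E (pth (i + 1)) (t.get ⟨i, hi⟩) (pth i)) :
    pth 0 = steps E hsrr (pth t.length) t := by
  induction t generalizing pth with
  | nil => simp
  | cons x t ih =>
    have h1 : pth 1 = steps E hsrr (pth (t.length + 1)) t := by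
      have := ih (fun j => pth (j + 1)) (fun i hi => h (i + 1) (by simpa using Nat.succ_lt_succ hi))
      simpa using this
    have h0 : E (pth 1) x (pth 0) := h 0 (by simp)
    simp only [List.length_cons, steps_cons, ← h1]
    exact (dstep_eq E hsrr h0).symm

lemma steps_loop {v₀ : V} (hloop : ∀ x : X, E v₀ x v₀) (t : List X) :
    steps E hsrr v₀ t = v₀ := by
  induction t with
  | nil => rfl
  | cons x t ih => simp [ih, dstep_eq E hsrr (hloop x)]

lemma exists_steps_path (n : ℕ) (q : ℕ → V) (l : ℕ → X)
    (h : ∀ i < n, E (q i) (l i) (q (i + 1))) :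
    ∃ t : List X, steps E hsrr (q 0) t = q n := by
  induction n with
  | zero => exact ⟨[], rfl⟩
  | succ n ih =>
    obtain ⟨t, ht⟩ := ih (fun i hi => h i (Nat.lt_succ_of_lt hi))
    exact ⟨l n :: t, by simp [ht, dstep_eq E hsrr (h n (Nat.lt_succ_self n))]⟩

lemma exists_sync_list {v₀ : V} (hloop : ∀ x : X, E v₀ x v₀)
    (hreach : ∀ v : V, ∃ t : List X, steps E hsrr v t = v₀) (vs : List V) :
    ∃ t : List X, ∀ v ∈ vs, steps E hsrr v t = v₀ := by
  induction vs with
  | nil => exact ⟨[], by simp⟩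
  | cons v vs ih =>
    obtain ⟨t, ht⟩ := ih
    obtain ⟨s, hs⟩ := hreach (steps E hsrr v t)
    refine ⟨s ++ t, ?_⟩
    intro u hu
    rcases List.mem_cons.mp hu with rfl | hu
    · rw [steps_append, hs]
    · rw [steps_append, ht u hu, steps_loop E hsrr hloop]

lemma exists_sync [Fintype V] {v₀ : V} (hloop : ∀ x : X, E v₀ x v₀)
    (hreach : ∀ v : V, ∃ (n : ℕ) (q : ℕ → V) (l : ℕ → X),
      q 0 = v ∧ q n = v₀ ∧ ∀ i < n, E (q i) (l i) (q (i + 1))) :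
    ∃ t : List X, ∀ v : V, steps E hsrr v t = v₀ := by
  have hr : ∀ v : V, ∃ t : List X, steps E hsrr v t = v₀ := by
    intro v
    obtain ⟨n, q, l, hq0, hqn, hpath⟩ := hreach v
    obtain ⟨t, ht⟩ := exists_steps_path E hsrr n q l hpath
    exact ⟨t, by rw [hq0] at ht; rw [ht, hqn]⟩
  obtain ⟨t, ht⟩ := exists_sync_list E hsrr hloop hr Finset.univ.toList
  exact ⟨t, fun v => ht v (by simp)⟩

/-- Decomposition of `ofFn t` around an occurrence of `u`. -/
lemma ofFn_decomp {n : ℕ} (t : Fin n → X) (a : ℕ) (u : List X) (hab : a + u.length ≤ n)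
    (hmatch : ∀ (i : ℕ) (hi : i < u.length), u.get ⟨i, hi⟩ = t ⟨a + i, by omega⟩) :
    List.ofFn t =
      (List.ofFn fun x : Fin a => t ⟨x, by omega⟩) ++ u ++
      (List.ofFn fun x : Fin (n - (a + u.length)) => t ⟨a + u.length + x, by omega⟩) := by
  apply List.ext_getElem
  · simp; omega
  · intro i h1 h2
    rw [List.getElem_ofFn]
    by_cases hia : i < a
    · rw [List.getElem_append_left (by simp [List.length_append]; omega),
        List.getElem_append_left (by simpa using hia), List.getElem_ofFn]
    · by_cases hib : i < a + u.length
      · rw [List.getElem_append_left (by simp [List.length_append]; omega),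
          List.getElem_append_right (by simpa using not_lt.mp hia)]
        have hm := hmatch (i - a) (by omega)
        simp only [List.get_eq_getElem] at hm
        simp only [List.length_ofFn]
        rw [hm]
        congr 1
        exact Fin.ext (by simp; omega)
      · rw [List.getElem_append_right (by simp [List.length_append]; omega), List.getElem_ofFn]
        congr 1
        exact Fin.ext (by simp [List.length_append]; omega)

end Aux

/-- If a finite strictly right-resolving labeled graph has a vertex `v₀` reachable from every
vertex and carrying a loop labeled `x` for every letter `x`, then its measure number is `1`:
`Σ_v μ(F_v) = 1` for every Bernoulli measure with positive letter probabilities. -/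
theorem stmt_18 {V X : Type*} [Fintype V] [Fintype X] [Nonempty X] [MeasurableSpace X]
    (E : V → X → V → Prop)
    (hsrr : ∀ (v : V) (x : X), ∃! u : V, E v x u)
    (v₀ : V)
    (hreach : ∀ v : V, ∃ (n : ℕ) (q : ℕ → V) (l : ℕ → X),
      q 0 = v ∧ q n = v₀ ∧ ∀ i < n, E (q i) (l i) (q (i + 1)))
    (hloop : ∀ x : X, E v₀ x v₀)
    (p : X → ℝ≥0∞) (hp : ∀ x, p x ≠ 0) (hp1 : ∑ x, p x = 1)
    (μ : Measure (ℕ → X)) (hμ : ∀ u : List X, μ (Cyl u) = (u.map p).prod) :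
    ∑ v : V, μ {w | EndsInf E w v} = 1 := by
  classical
  obtain ⟨ub, hub⟩ := exists_sync E hsrr hloop hreach
  set m := ub.length with hm
  have huniv : μ Set.univ = 1 := by
    have h := hμ []
    have he : Cyl ([] : List X) = Set.univ := by
      ext w; simp [Cyl]
    rw [he] at h
    simpa using h
  have hlow : (1 : ℝ≥0∞) ≤ ∑ v : V, μ {w | EndsInf E w v} := by
    have h0 : {w : ℕ → X | EndsInf E w v₀} = Set.univ := by
      ext w
      refine ⟨fun _ => trivial, fun _ => ⟨fun _ => v₀, rfl, fun i => hloop (w i)⟩⟩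
    have h1 : μ {w | EndsInf E w v₀} = 1 := by rw [h0, huniv]
    rw [← h1]
    exact Finset.single_le_sum (f := fun v => μ {w | EndsInf E w v}) (fun _ _ => zero_le) (Finset.mem_univ v₀)
  set uf : Fin m → X := fun i => ub.get i with huf
  set B : (Fin m → X) → ℝ≥0∞ := fun h => ∏ i, p (h i) with hB
  have htot : ∀ N : ℕ, ∑ t : Fin N → X, (∏ a, p (t a)) = 1 := by
    intro N
    have h := Finset.prod_univ_sum (fun _ : Fin N => (Finset.univ : Finset X)) (fun _ x => p x)
    rw [Fintype.piFinset_univ] at h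
    rw [← h]
    simp [hp1]
  set r : ℝ≥0∞ := ∑ h ∈ Finset.univ.erase uf, B h with hr
  have hrc : r + B uf = 1 := by
    rw [hr, Finset.sum_erase_add _ _ (Finset.mem_univ uf)]
    exact htot m
  have hcne : B uf ≠ 0 := by
    rw [hB]
    exact Finset.prod_ne_zero_iff.mpr fun i _ => hp _
  have hrlt : r < 1 := by
    refine lt_of_le_of_ne (le_trans le_self_add hrc.le) fun hr1 => ?_
    rw [hr1] at hrc
    exact hcne ((ENNReal.add_right_inj one_ne_top).mp (by simpa using hrc))
  set C : ℝ≥0∞ := (Fintype.card V : ℝ≥0∞) with hC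
  have key : ∀ k : ℕ, (∑ v : V, μ {w | EndsInf E w v}) ≤ 1 + C * r ^ k := by
    intro k
    set n := k * m with hn
    have hpos : ∀ (j : Fin k) (i : Fin m), (j : ℕ) * m + (i : ℕ) < n := by
      intro j i
      have hj := j.2
      have hi := i.2
      calc (j : ℕ) * m + (i : ℕ) < ((j : ℕ) + 1) * m := by nlinarith
      _ ≤ k * m := Nat.mul_le_mul_right m (by omega)
    set pos : Fin k → Fin m → Fin n := fun j i => ⟨(j : ℕ) * m + (i : ℕ), hpos j i⟩ with hposd
    set Sync : (Fin n → X) → Prop := fun t => ∃ j : Fin k, ∀ i : Fin m, t (pos j i) = uf i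
      with hSy
    set W : (Fin n → X) → ℝ≥0∞ := fun t => ∏ a, p (t a) with hWd
    have hcover : ∀ v : V, {w | EndsInf E w v} ⊆
        ⋃ t ∈ Finset.univ.filter (fun t : Fin n → X => ∃ q, steps E hsrr q (List.ofFn t) = v),
          Cyl (List.ofFn t) := by
      intro v w hw
      obtain ⟨pth, hp0, hpe⟩ := hw
      have hmem : (fun a : Fin n => w a) ∈
          Finset.univ.filter (fun t : Fin n → X => ∃ q, steps E hsrr q (List.ofFn t) = v) := by
        rw [Finset.mem_filter]
        refine ⟨Finset.mem_univ _, ⟨pth ((List.ofFn fun a : Fin n => w a).length), ?_⟩⟩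
        have hu := steps_unique E hsrr (List.ofFn fun a : Fin n => w a) pth ?_
        · rw [← hu, hp0]
        · intro i hi
          rw [List.get_ofFn]
          exact hpe i
      refine Set.mem_biUnion hmem ?_
      simp only [Cyl, Set.mem_setOf_eq]
      intro i hi
      rw [List.get_ofFn]
      rfl
    have hstep1 : ∀ v : V, μ {w | EndsInf E w v} ≤
        ∑ t ∈ Finset.univ.filter (fun t : Fin n → X => ∃ q, steps E hsrr q (List.ofFn t) = v),
          W t := by
      intro v
      calc μ {w | EndsInf E w v} ≤ μ (⋃ t ∈ Finset.univ.filter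
              (fun t : Fin n → X => ∃ q, steps E hsrr q (List.ofFn t) = v), Cyl (List.ofFn t)) :=
            measure_mono (hcover v)
      _ ≤ ∑ t ∈ Finset.univ.filter
              (fun t : Fin n → X => ∃ q, steps E hsrr q (List.ofFn t) = v), μ (Cyl (List.ofFn t)) :=
            measure_biUnion_finset_le _ _
      _ = ∑ t ∈ Finset.univ.filter
              (fun t : Fin n → X => ∃ q, steps E hsrr q (List.ofFn t) = v), W t := by
            refine Finset.sum_congr rfl fun t _ => ?_
            rw [hμ, List.map_ofFn, List.prod_ofFn]
            rfl
    have hswap : (∑ v : V, μ {w | EndsInf E w v}) ≤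
        ∑ t : Fin n → X,
          ((Finset.univ.filter fun v : V => ∃ q, steps E hsrr q (List.ofFn t) = v).card : ℝ≥0∞)
            * W t := by
      calc (∑ v : V, μ {w | EndsInf E w v}) ≤ ∑ v : V, ∑ t ∈ Finset.univ.filter
              (fun t : Fin n → X => ∃ q, steps E hsrr q (List.ofFn t) = v), W t :=
            Finset.sum_le_sum fun v _ => hstep1 v
      _ = ∑ v : V, ∑ t : Fin n → X,
            (if (∃ q, steps E hsrr q (List.ofFn t) = v) then W t else 0) := by
            exact Finset.sum_congr rfl fun v _ => Finset.sum_filter _ _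
      _ = ∑ t : Fin n → X, ∑ v : V,
            (if (∃ q, steps E hsrr q (List.ofFn t) = v) then W t else 0) := Finset.sum_comm
      _ = _ := by
            refine Finset.sum_congr rfl fun t _ => ?_
            rw [Finset.sum_ite, Finset.sum_const, Finset.sum_const_zero, add_zero, nsmul_eq_mul]
    have hcnt : ∀ t : Fin n → X,
        ((Finset.univ.filter fun v : V => ∃ q, steps E hsrr q (List.ofFn t) = v).card : ℝ≥0∞)
          * W t ≤ W t + (if ¬ Sync t then C * W t else 0) := by
      intro t
      by_cases hs : Sync t
      · rw [if_neg (not_not_intro hs)]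
        obtain ⟨j, hj⟩ := hs
        have hab : (j : ℕ) * m + ub.length ≤ n := by
          have hj2 := j.2
          calc (j : ℕ) * m + ub.length = ((j : ℕ) + 1) * m := by rw [← hm]; ring
          _ ≤ k * m := Nat.mul_le_mul_right m (by omega)
        have hdec := ofFn_decomp t ((j : ℕ) * m) ub hab ?_
        · have hsteps : ∀ q : V, steps E hsrr q (List.ofFn t) =
              steps E hsrr v₀ (List.ofFn fun x : Fin ((j : ℕ) * m) => t ⟨x, by omega⟩) := by
            intro q
            rw [hdec, steps_append, steps_append, hub]
          have hone : (Finset.univ.filter fun v : V =>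
              ∃ q, steps E hsrr q (List.ofFn t) = v).card ≤ 1 := by
            refine Finset.card_le_one.mpr fun v hv v' hv' => ?_
            obtain ⟨q, hq⟩ := (Finset.mem_filter.mp hv).2
            obtain ⟨q', hq'⟩ := (Finset.mem_filter.mp hv').2
            rw [← hq, ← hq', hsteps q, hsteps q']
          calc ((Finset.univ.filter fun v : V =>
                ∃ q, steps E hsrr q (List.ofFn t) = v).card : ℝ≥0∞) * W t
              ≤ 1 * W t := mul_le_mul_left (by exact_mod_cast hone) _
          _ = W t + 0 := by rw [one_mul, add_zero]
        · intro i hi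
          exact (hj ⟨i, by omega⟩).symm
      · rw [if_pos hs]
        have hcard : (Finset.univ.filter fun v : V =>
            ∃ q, steps E hsrr q (List.ofFn t) = v).card ≤ Fintype.card V :=
          Finset.card_filter_le _ _
        calc ((Finset.univ.filter fun v : V => ∃ q, steps E hsrr q (List.ofFn t) = v).card : ℝ≥0∞)
              * W t ≤ C * W t := mul_le_mul_left (by rw [hC]; exact_mod_cast hcard) _
        _ ≤ W t + C * W t := le_add_self
    have hNS : ∑ t ∈ Finset.univ.filter (fun t : Fin n → X => ¬ Sync t), W t ≤ r ^ k := by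
      rcases Nat.eq_zero_or_pos m with hm0 | hmpos
      · rcases Nat.eq_zero_or_pos k with hk0 | hkpos
        · subst hk0
          calc ∑ t ∈ Finset.univ.filter (fun t : Fin n → X => ¬ Sync t), W t
              ≤ ∑ t : Fin n → X, W t :=
                Finset.sum_le_sum_of_subset (Finset.filter_subset _ _)
          _ = 1 := htot n
          _ = r ^ 0 := (pow_zero r).symm
        · have hall : ∀ t : Fin n → X, Sync t := by
            intro t
            exact ⟨⟨0, hkpos⟩, fun i => absurd i.2 (by omega)⟩
          have : Finset.univ.filter (fun t : Fin n → X => ¬ Sync t) = ∅ := by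
            refine Finset.filter_eq_empty_iff.mpr fun t _ => not_not_intro (hall t)
          rw [this, Finset.sum_empty]
          exact zero_le
      · have hmlt : ∀ a : Fin n, (a : ℕ) % m < m := fun a => Nat.mod_lt _ hmpos
        have hdlt : ∀ a : Fin n, (a : ℕ) / m < k := by
          intro a
          have h2 : (a : ℕ) < k * m := by rw [← hn]; exact a.2
          exact (Nat.div_lt_iff_lt_mul hmpos).mpr h2
        set e : Fin k × Fin m ≃ Fin n :=
          { toFun := fun ji => pos ji.1 ji.2
            invFun := fun a => (⟨(a : ℕ) / m, hdlt a⟩, ⟨(a : ℕ) % m, hmlt a⟩)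
            left_inv := by
              rintro ⟨j, i⟩
              have h1 : ((j : ℕ) * m + (i : ℕ)) / m = (j : ℕ) := by
                rw [mul_comm, Nat.mul_add_div hmpos, Nat.div_eq_of_lt i.2, add_zero]
              have h2 : ((j : ℕ) * m + (i : ℕ)) % m = (i : ℕ) := by
                rw [mul_comm, Nat.mul_add_mod, Nat.mod_eq_of_lt i.2]
              rw [hposd]
              exact Prod.ext (Fin.ext h1) (Fin.ext h2)
            right_inv := by
              intro a
              rw [hposd]
              apply Fin.ext
              simp only
              rw [mul_comm]
              exact Nat.div_add_mod _ _ } with he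
        have heq : ∑ t ∈ Finset.univ.filter (fun t : Fin n → X => ¬ Sync t), W t =
            ∑ g ∈ Fintype.piFinset (fun _ : Fin k => Finset.univ.erase uf), ∏ j, B (g j) := by
          refine Finset.sum_nbij' (fun t => fun j i => t (pos j i))
            (fun g => fun a : Fin n => g ((e.symm a).1) ((e.symm a).2)) ?_ ?_ ?_ ?_ ?_
          · intro t ht
            rw [Fintype.mem_piFinset]
            intro j
            rw [Finset.mem_erase]
            refine ⟨fun hcon => ?_, Finset.mem_univ _⟩
            have hns := (Finset.mem_filter.mp ht).2
            rw [hSy] at hns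
            exact hns ⟨j, fun i => congrFun hcon i⟩
          · intro g hg
            rw [Finset.mem_filter]
            refine ⟨Finset.mem_univ _, ?_⟩
            rw [hSy]
            rintro ⟨j, hj⟩
            have hgj := Fintype.mem_piFinset.mp hg j
            rw [Finset.mem_erase] at hgj
            refine hgj.1 (funext fun i => ?_)
            have h2 : g (e.symm (pos j i)).1 (e.symm (pos j i)).2 = uf i := hj i
            have harg : e.symm (pos j i) = (j, i) := e.symm_apply_apply (j, i)
            rw [harg] at h2
            exact h2
          · intro t ht
            funext a
            show t (pos ((e.symm a).1) ((e.symm a).2)) = t a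
            have harg : pos ((e.symm a).1) ((e.symm a).2) = a := e.apply_symm_apply a
            rw [harg]
          · intro g hg
            funext j i
            show g (e.symm (pos j i)).1 (e.symm (pos j i)).2 = g j i
            have harg : e.symm (pos j i) = (j, i) := e.symm_apply_apply (j, i)
            rw [harg]
          · intro t ht
            rw [hWd, hB]
            simp only
            rw [← Equiv.prod_comp e (fun a => p (t a)), Fintype.prod_prod_type]
            rfl
        rw [heq]
        rw [← Finset.prod_univ_sum (fun _ : Fin k => Finset.univ.erase uf) (fun _ h => B h)]
        rw [← hr, Finset.prod_const, Finset.card_univ, Fintype.card_fin]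
    calc (∑ v : V, μ {w | EndsInf E w v}) ≤ _ := hswap
    _ ≤ ∑ t : Fin n → X, (W t + (if ¬ Sync t then C * W t else 0)) :=
          Finset.sum_le_sum fun t _ => hcnt t
    _ = (∑ t : Fin n → X, W t) + ∑ t : Fin n → X, (if ¬ Sync t then C * W t else 0) :=
          Finset.sum_add_distrib
    _ = 1 + C * ∑ t ∈ Finset.univ.filter (fun t : Fin n → X => ¬ Sync t), W t := by
          rw [htot n, ← Finset.sum_filter, Finset.mul_sum]
    _ ≤ 1 + C * r ^ k := add_le_add_right (mul_le_mul_right hNS C) 1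
  have hCtop : C ≠ ⊤ := by rw [hC]; exact ENNReal.natCast_ne_top _
  have htend : Filter.Tendsto (fun k : ℕ => 1 + C * r ^ k) Filter.atTop (nhds 1) := by
    have h1 : Filter.Tendsto (fun k : ℕ => r ^ k) Filter.atTop (nhds 0) :=
      ENNReal.tendsto_pow_atTop_nhds_zero_of_lt_one hrlt
    have h2 : Filter.Tendsto (fun k : ℕ => C * r ^ k) Filter.atTop (nhds 0) := by
      simpa using ENNReal.Tendsto.const_mul h1 (Or.inr hCtop)
    simpa using Filter.Tendsto.add (tendsto_const_nhds : Filter.Tendsto (fun _ : ℕ => (1:ℝ≥0∞))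
      Filter.atTop (nhds 1)) h2
  exact le_antisymm (ge_of_tendsto' htend key) hlow
end
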